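/- Assume S(x) = x²/2 + O(x^{2-δ}) for some 0 < δ < 2, and let F(z) = Σ_{n=1}^∞ Λ(n) zⁿ. Then there is a constant C > 0 such that for every integer N ≥ 2 and every complex z with |z| = 1 - 1/N, |F(z)² - 1/(1-z)²| ≤ C · |1-z| · N^{3-δ}. -/

import Mathlib

open Filter Finset
open scoped ArithmeticFunction

/-- The Goldbach generating function `G(n) = ∑_{k₁+k₂=n} Λ(k₁)Λ(k₂)`. -/
noncomputable def goldbachG (n : ℕ) : ℝ :=
  ∑ p ∈ Finset.HasAntidiagonal.antidiagonal n, Λ p.1 * Λ p.2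

/-- The summatory Goldbach function `S(N) = ∑_{n ≤ N} G(n)`. -/
noncomputable def goldbachS (N : ℕ) : ℝ :=
  ∑ n ∈ Finset.range (N + 1), goldbachG n

attribute [local instance] Classical.propDecidable

noncomputable def Dfun (n : ℕ) : ℝ :=
  goldbachS n - ((n : ℝ) + 1) * ((n : ℝ) + 2) / 2


lemma vonM_le_nat (n : ℕ) : Λ n ≤ (n : ℝ) := by
  rcases Nat.eq_zero_or_pos n with h | h
  · simp [h]
  · calc Λ n ≤ Real.log n := ArithmeticFunction.vonMangoldt_le_log
    _ ≤ (n : ℝ) - 1 := Real.log_le_sub_one_of_pos (by exact_mod_cast h)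
    _ ≤ n := by linarith

lemma summable_F_norm {z : ℂ} (hz : ‖z‖ < 1) :
    Summable fun n => ‖(Λ n : ℂ) * z ^ n‖ := by
  have hg : Summable (fun n : ℕ => (n : ℝ) * ‖z‖ ^ n) := by
    simpa using summable_pow_mul_geometric_of_norm_lt_one 1 (by simpa using hz) (R := ℝ)
  refine hg.of_nonneg_of_le (fun n => norm_nonneg _) (fun n => ?_)
  rw [norm_mul, norm_pow]
  gcongr
  rw [Complex.norm_real, Real.norm_of_nonneg ArithmeticFunction.vonMangoldt_nonneg]
  exact vonM_le_nat n

lemma inner_eq {z : ℂ} (n : ℕ) :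
    ∑ kl ∈ antidiagonal n, ((Λ kl.1 : ℂ) * z ^ kl.1) * ((Λ kl.2 : ℂ) * z ^ kl.2)
      = ((goldbachG n : ℝ) : ℂ) * z ^ n := by
  rw [goldbachG]
  push_cast
  rw [Finset.sum_mul]
  apply Finset.sum_congr rfl
  intro kl hkl
  rw [Finset.HasAntidiagonal.mem_antidiagonal] at hkl
  rw [← hkl, pow_add]
  ring

lemma hasSum_G {z : ℂ} (hz : ‖z‖ < 1) :
    HasSum (fun n => ((goldbachG n : ℝ) : ℂ) * z ^ n) ((∑' n, (Λ n : ℂ) * z ^ n) ^ 2) := by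
  have hf := summable_F_norm hz
  have h2 : Summable (fun n => ∑ kl ∈ antidiagonal n,
      ((Λ kl.1 : ℂ) * z ^ kl.1) * ((Λ kl.2 : ℂ) * z ^ kl.2)) :=
    (summable_norm_sum_mul_antidiagonal_of_summable_norm hf hf).of_norm
  have h1 := tsum_mul_tsum_eq_tsum_sum_antidiagonal_of_summable_norm hf hf
  have := h2.hasSum
  rw [← h1] at this
  simp only [inner_eq] at this ⊢
  rw [sq]
  exact this

lemma hasSum_one_sub_sq {z : ℂ} (hz : ‖z‖ < 1) :
    HasSum (fun n : ℕ => ((n : ℂ) + 1) * z ^ n) (1 / (1 - z) ^ 2) := by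
  have h1 : HasSum (fun n : ℕ => (n : ℂ) * z ^ n) (z / (1 - z) ^ 2) :=
    hasSum_coe_mul_geometric_of_norm_lt_one hz
  have h2 : HasSum (fun n : ℕ => z ^ n) (1 - z)⁻¹ := hasSum_geometric_of_norm_lt_one hz
  have h := h1.add h2
  have hz1 : (1 : ℂ) - z ≠ 0 := by
    intro h0
    have : z = 1 := by linear_combination -h0
    rw [this] at hz; simp at hz
  have he : (1:ℂ) / (1 - z) ^ 2 = z / (1 - z) ^ 2 + (1 - z)⁻¹ := by
    field_simp
    ring
  rw [he]
  convert h using 1 with n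
  ext n
  ring

lemma goldbachG_nonneg (n : ℕ) : 0 ≤ goldbachG n :=
  Finset.sum_nonneg fun _ _ => mul_nonneg ArithmeticFunction.vonMangoldt_nonneg
    ArithmeticFunction.vonMangoldt_nonneg

lemma goldbachG_le (n : ℕ) : goldbachG n ≤ ((n : ℝ) + 1) ^ 3 := by
  have h : goldbachG n ≤ ∑ _p ∈ Finset.HasAntidiagonal.antidiagonal n, ((n : ℝ) + 1) ^ 2 := by
    apply Finset.sum_le_sum
    intro p hp
    rw [Finset.HasAntidiagonal.mem_antidiagonal] at hp
    have hp1 : p.1 ≤ n := by omega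
    have hp2 : p.2 ≤ n := by omega
    have hc1 : (p.1:ℝ) ≤ (n:ℝ) := Nat.cast_le.2 hp1
    have hc2 : (p.2:ℝ) ≤ (n:ℝ) := Nat.cast_le.2 hp2
    have h1 : Λ p.1 ≤ (n : ℝ) + 1 := (vonM_le_nat p.1).trans (by linarith)
    have h2 : Λ p.2 ≤ (n : ℝ) + 1 := (vonM_le_nat p.2).trans (by linarith)
    have := ArithmeticFunction.vonMangoldt_nonneg (n := p.1)
    have := ArithmeticFunction.vonMangoldt_nonneg (n := p.2)
    calc Λ p.1 * Λ p.2 ≤ ((n:ℝ)+1) * ((n:ℝ)+1) := by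
          apply mul_le_mul h1 h2 ‹0 ≤ Λ p.2› (by positivity)
      _ = ((n:ℝ)+1)^2 := by ring
  refine h.trans ?_
  rw [Finset.sum_const, Finset.Nat.card_antidiagonal, nsmul_eq_mul]
  push_cast
  ring_nf
  exact le_refl _

lemma goldbachS_le (n : ℕ) : goldbachS n ≤ ((n : ℝ) + 1) ^ 4 := by
  calc goldbachS n ≤ ∑ _k ∈ Finset.range (n+1), ((n : ℝ) + 1) ^ 3 := by
        apply Finset.sum_le_sum
        intro k hk
        rw [Finset.mem_range] at hk
        refine (goldbachG_le k).trans ?_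
        have hkn : (k:ℝ) ≤ (n:ℝ) := Nat.cast_le.2 (Nat.lt_succ_iff.mp hk)
        have h0 : (0:ℝ) ≤ (k:ℝ) := Nat.cast_nonneg k
        gcongr <;> linarith
    _ = ((n:ℝ)+1) * ((n:ℝ)+1)^3 := by rw [Finset.sum_const, Finset.card_range]; push_cast; ring
    _ = ((n:ℝ)+1)^4 := by ring

lemma goldbachS_nonneg (n : ℕ) : 0 ≤ goldbachS n :=
  Finset.sum_nonneg fun k _ => goldbachG_nonneg k

lemma Dfun_abs_le (n : ℕ) : |Dfun n| ≤ 2 * ((n : ℝ) + 1) ^ 4 := by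
  rw [Dfun, abs_sub_le_iff]
  have h1 := goldbachS_le n
  have h2 := goldbachS_nonneg n
  have : (0:ℝ) ≤ (n:ℝ) := Nat.cast_nonneg n
  have h30 : (1:ℝ) ≤ ((n:ℝ)+1)^2 := by nlinarith
  have h3 : ((n:ℝ)+1)^2 ≤ ((n:ℝ)+1)^4 := by nlinarith [sq_nonneg (((n:ℝ)+1)^2 - 1)]
  have h4 : ((n:ℝ)+1) * ((n:ℝ)+2) / 2 ≤ ((n:ℝ)+1)^2 := by nlinarith
  have h5 : (1:ℝ) ≤ ((n:ℝ)+1)^4 := by nlinarith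
  constructor <;> nlinarith

lemma Dfun_succ_sub (n : ℕ) :
    Dfun (n + 1) - Dfun n = goldbachG (n + 1) - ((n : ℝ) + 2) := by
  have h : goldbachS (n + 1) = goldbachS n + goldbachG (n + 1) := by
    rw [goldbachS, goldbachS, Finset.sum_range_succ]
  rw [Dfun, Dfun, h]
  push_cast
  ring

lemma Dfun_zero : Dfun 0 = goldbachG 0 - 1 := by
  rw [Dfun, goldbachS]
  norm_num [Finset.sum_range_one]

lemma summable_D_norm {z : ℂ} (hz : ‖z‖ < 1) :
    Summable fun n => ‖((Dfun n : ℝ) : ℂ) * z ^ n‖ := by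
  have hr : ‖(‖z‖)‖ < 1 := by simpa using hz
  have hg : Summable (fun n : ℕ => (32 : ℝ) * ((n : ℝ) ^ 4 * ‖z‖ ^ n) + 32 * ‖z‖ ^ n) := by
    exact ((summable_pow_mul_geometric_of_norm_lt_one 4 hr).mul_left 32).add
      ((summable_geometric_of_norm_lt_one hr).mul_left 32)
  refine hg.of_nonneg_of_le (fun n => norm_nonneg _) (fun n => ?_)
  rw [norm_mul, norm_pow, Complex.norm_real, Real.norm_eq_abs]
  have h1 : |Dfun n| ≤ 2 * ((n : ℝ) + 1) ^ 4 := Dfun_abs_le n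
  have h2 : ((n:ℝ)+1)^4 ≤ 16 * ((n:ℝ)^4 + 1) := by
    rcases Nat.eq_zero_or_pos n with h | h
    · simp [h]
    · have : (1:ℝ) ≤ (n:ℝ) := by exact_mod_cast h
      nlinarith [sq_nonneg ((n:ℝ)^2 - 1), sq_nonneg ((n:ℝ) - 1), pow_pos (by linarith : (0:ℝ) < n) 3]
  have h3 : (0:ℝ) ≤ ‖z‖ ^ n := by positivity
  calc |Dfun n| * ‖z‖ ^ n ≤ (2 * (16 * ((n:ℝ)^4 + 1))) * ‖z‖ ^ n := by
        apply mul_le_mul_of_nonneg_right _ h3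
        linarith
    _ = 32 * ((n : ℝ) ^ 4 * ‖z‖ ^ n) + 32 * ‖z‖ ^ n := by ring

lemma key_identity {z : ℂ} (hz : ‖z‖ < 1) :
    (∑' n, (Λ n : ℂ) * z ^ n) ^ 2 - 1 / (1 - z) ^ 2
      = (1 - z) * ∑' n, ((Dfun n : ℝ) : ℂ) * z ^ n := by
  have hD : Summable fun n => ((Dfun n : ℝ) : ℂ) * z ^ n := (summable_D_norm hz).of_norm
  have hGm := hasSum_G hz
  have hPm := hasSum_one_sub_sq hz
  -- LHS = ∑' (G n - (n+1)) z^n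
  have hL : (∑' n, (Λ n : ℂ) * z ^ n) ^ 2 - 1 / (1 - z) ^ 2
      = ∑' n, (((goldbachG n : ℝ) : ℂ) - ((n : ℂ) + 1)) * z ^ n := by
    have := (hGm.sub hPm).tsum_eq
    rw [← this]
    congr 1
    ext n
    ring
  rw [hL]
  -- RHS manipulation
  set A := ∑' n, ((Dfun n : ℝ) : ℂ) * z ^ n with hA
  have hzA : z * A = ∑' n, ((Dfun n : ℝ) : ℂ) * z ^ (n + 1) := by
    rw [hA, ← tsum_mul_left]
    exact tsum_congr fun n => by ring
  have hshift : A = ((Dfun 0 : ℝ) : ℂ) + ∑' n, ((Dfun (n+1) : ℝ) : ℂ) * z ^ (n + 1) := by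
    rw [hA]
    simpa using hD.tsum_eq_zero_add
  have hsub : Summable fun n => ((Dfun (n+1) : ℝ) : ℂ) * z ^ (n + 1) := by
    have := (summable_nat_add_iff 1).2 hD
    simpa using this
  have hsub2 : Summable fun n => ((Dfun n : ℝ) : ℂ) * z ^ (n + 1) := by
    have : (fun n => ((Dfun n : ℝ) : ℂ) * z ^ (n + 1)) = fun n => z * (((Dfun n : ℝ) : ℂ) * z ^ n) := by
      ext n; ring
    rw [this]
    exact hD.mul_left z
  have hG' : Summable fun n => (((goldbachG n : ℝ) : ℂ) - ((n : ℂ) + 1)) * z ^ n := by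
    have := (hGm.summable.sub hPm.summable)
    simpa [sub_mul] using this
  have expand : (1 - z) * A = ((Dfun 0 : ℝ) : ℂ)
      + ∑' n, (((Dfun (n+1) : ℝ) : ℂ) - ((Dfun n : ℝ) : ℂ)) * z ^ (n + 1) := by
    have : (1 - z) * A = A - z * A := by ring
    rw [this, hzA, hshift]
    rw [add_sub_assoc, ← Summable.tsum_sub hsub hsub2]
    congr 1
    exact tsum_congr fun n => by ring
  rw [expand]
  have hterm : ∀ n : ℕ, (((Dfun (n+1) : ℝ) : ℂ) - ((Dfun n : ℝ) : ℂ)) * z ^ (n + 1)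
      = (((goldbachG (n+1) : ℝ) : ℂ) - (((n+1) : ℂ) + 1)) * z ^ (n + 1) := by
    intro n
    have := Dfun_succ_sub n
    have hc : ((Dfun (n+1) : ℝ) : ℂ) - ((Dfun n : ℝ) : ℂ)
        = ((goldbachG (n+1) : ℝ) : ℂ) - (((n:ℂ)) + 2) := by
      exact_mod_cast congrArg (Complex.ofReal) this
    rw [hc]
    push_cast
    ring
  rw [hG'.tsum_eq_zero_add]
  congr 1
  · rw [Dfun_zero]; push_cast; ring
  · exact tsum_congr fun n => by rw [hterm n]; push_cast; ring

lemma tsum_D_bound (α K : ℝ) (hα0 : 0 ≤ α) (hα2 : α ≤ 2) (hK : 0 ≤ K)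
    (hD : ∀ n : ℕ, |Dfun n| ≤ K * ((n : ℝ) + 1) ^ α)
    (N : ℕ) (hN : 2 ≤ N) (z : ℂ) (hz : ‖z‖ = 1 - 1 / (N : ℝ)) :
    ‖∑' n, ((Dfun n : ℝ) : ℂ) * z ^ n‖ ≤ 32 * K * (N : ℝ) ^ (α + 1) := by
  have hN1 : (1 : ℝ) ≤ (N : ℝ) := by exact_mod_cast Nat.one_le_of_lt hN
  have hNpos : (0 : ℝ) < (N : ℝ) := by linarith
  set x : ℝ := 1 / (2 * (N : ℝ)) with hx
  have hN2 : (2:ℝ) ≤ (N:ℝ) := by exact_mod_cast hN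
  have hx0 : 0 < x := by positivity
  have hxhalf : x ≤ 1 / 4 := by
    rw [hx]
    rw [div_le_div_iff₀ (by positivity) (by norm_num)]
    nlinarith
  have hrz : ‖z‖ = 1 - 2 * x := by rw [hz, hx]; field_simp
  have hr1 : ‖z‖ < 1 := by rw [hrz]; linarith
  set q : ℝ := (1 - 2 * x) * Real.exp x with hq
  have hexp_le : Real.exp x ≤ (1 - x)⁻¹ := by
    have h1 : 1 - x ≤ Real.exp (-x) := by
      have := Real.add_one_le_exp (-x); linarith
    have h2 : Real.exp x * (1 - x) ≤ 1 := by
      calc Real.exp x * (1 - x) ≤ Real.exp x * Real.exp (-x) := by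
            apply mul_le_mul_of_nonneg_left h1 (Real.exp_pos x).le
        _ = 1 := by rw [← Real.exp_add]; simp
    have h1x : (0:ℝ) < 1 - x := by linarith
    rw [inv_eq_one_div, le_div_iff₀ h1x]
    linarith
  have hq_le : q ≤ 1 - x := by
    have h1x : 0 < 1 - x := by linarith
    have : q ≤ (1 - 2 * x) * (1 - x)⁻¹ := by
      apply mul_le_mul_of_nonneg_left hexp_le (by linarith)
    refine this.trans ?_
    rw [mul_inv_le_iff₀ h1x]
    nlinarith
  have hq0 : 0 ≤ q := by
    apply mul_nonneg (by linarith) (Real.exp_pos x).le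
  have hq1 : q < 1 := by linarith
  -- termwise bound
  have hterm : ∀ n : ℕ, ‖((Dfun n : ℝ) : ℂ) * z ^ n‖ ≤ 16 * K * (N : ℝ) ^ α * q ^ n := by
    intro n
    rw [norm_mul, norm_pow, Complex.norm_real, Real.norm_eq_abs, hrz]
    have hbig : ((n : ℝ) + 1) ^ α ≤ 16 * (N : ℝ) ^ α * Real.exp x ^ n := by
      set t : ℝ := (n : ℝ) / (N : ℝ) with ht
      have ht0 : 0 ≤ t := by positivity
      have h1 : (n : ℝ) + 1 ≤ (N : ℝ) * (1 + t) := by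
        rw [ht, mul_add, mul_div_cancel₀ _ (ne_of_gt hNpos)]
        nlinarith [Nat.cast_nonneg (α := ℝ) n]
      have h2 : ((n : ℝ) + 1) ^ α ≤ ((N : ℝ) * (1 + t)) ^ α :=
        Real.rpow_le_rpow (by positivity) h1 hα0
      have h3 : ((N : ℝ) * (1 + t)) ^ α = (N : ℝ) ^ α * (1 + t) ^ α :=
        Real.mul_rpow hNpos.le (by linarith)
      have h4 : (1 + t) ^ α ≤ (1 + t) ^ (2 : ℝ) :=
        Real.rpow_le_rpow_of_exponent_le (by linarith) hα2
      have h5 : (1 + t) ^ (2 : ℝ) = (1 + t) ^ (2 : ℕ) := by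
        rw [← Real.rpow_natCast]; norm_num
      have h6 : (1 + t) ^ (2 : ℕ) ≤ 16 * Real.exp (t / 4) ^ (2 : ℕ) := by
        have ha : 1 + t ≤ 4 * (1 + t / 4) := by linarith
        have hb : 1 + t / 4 ≤ Real.exp (t / 4) := by
          simpa [add_comm] using Real.add_one_le_exp (t / 4)
        have hc : 1 + t ≤ 4 * Real.exp (t / 4) := by nlinarith [Real.exp_pos (t/4)]
        calc (1 + t) ^ (2:ℕ) ≤ (4 * Real.exp (t / 4)) ^ (2:ℕ) := by
              apply pow_le_pow_left₀ (by linarith) hc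
          _ = 16 * Real.exp (t / 4) ^ (2:ℕ) := by ring
      have h7 : Real.exp (t / 4) ^ (2 : ℕ) = Real.exp (t / 2) := by
        rw [← Real.exp_nat_mul]
        congr 1
        ring
      have h8 : Real.exp (t / 2) = Real.exp x ^ n := by
        rw [← Real.exp_nat_mul]
        congr 1
        rw [ht, hx, mul_one_div, div_div, mul_comm (N:ℝ) 2]
      calc ((n : ℝ) + 1) ^ α ≤ (N : ℝ) ^ α * (1 + t) ^ α := by rw [← h3]; exact h2
        _ ≤ (N : ℝ) ^ α * (1 + t) ^ (2:ℝ) := by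
            apply mul_le_mul_of_nonneg_left h4 (Real.rpow_nonneg hNpos.le α)
        _ = (N : ℝ) ^ α * (1 + t) ^ (2:ℕ) := by rw [h5]
        _ ≤ (N : ℝ) ^ α * (16 * Real.exp (t / 4) ^ (2:ℕ)) := by
            apply mul_le_mul_of_nonneg_left h6 (Real.rpow_nonneg hNpos.le α)
        _ = 16 * (N : ℝ) ^ α * Real.exp x ^ n := by rw [h7, h8]; ring
    have hDn := hD n
    have habs : (0:ℝ) ≤ (1 - 2*x) := by linarith
    calc |Dfun n| * (1 - 2*x) ^ n ≤ (K * ((n : ℝ) + 1) ^ α) * (1 - 2*x) ^ n := by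
          apply mul_le_mul_of_nonneg_right hDn (pow_nonneg habs n)
      _ ≤ (K * (16 * (N : ℝ) ^ α * Real.exp x ^ n)) * (1 - 2*x) ^ n := by
          apply mul_le_mul_of_nonneg_right _ (pow_nonneg habs n)
          apply mul_le_mul_of_nonneg_left hbig hK
      _ = 16 * K * (N : ℝ) ^ α * ((1 - 2*x) * Real.exp x) ^ n := by
          rw [mul_pow]; ring
      _ = 16 * K * (N : ℝ) ^ α * q ^ n := by rw [hq]
  have hsumq : Summable fun n : ℕ => 16 * K * (N : ℝ) ^ α * q ^ n :=
    (summable_geometric_of_lt_one hq0 hq1).mul_left _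
  have h1 : ‖∑' n, ((Dfun n : ℝ) : ℂ) * z ^ n‖ ≤ ∑' n, ‖((Dfun n : ℝ) : ℂ) * z ^ n‖ :=
    norm_tsum_le_tsum_norm (summable_D_norm hr1)
  have h2 : ∑' n, ‖((Dfun n : ℝ) : ℂ) * z ^ n‖ ≤ ∑' n : ℕ, 16 * K * (N : ℝ) ^ α * q ^ n :=
    Summable.tsum_le_tsum hterm (summable_D_norm hr1) hsumq
  have h3 : ∑' n : ℕ, 16 * K * (N : ℝ) ^ α * q ^ n = 16 * K * (N : ℝ) ^ α * (1 - q)⁻¹ := by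
    rw [tsum_mul_left, tsum_geometric_of_lt_one hq0 hq1]
  have h4 : (1 - q)⁻¹ ≤ 2 * (N : ℝ) := by
    have hxq : x ≤ 1 - q := by linarith
    have h1q : 0 < 1 - q := by linarith
    rw [inv_le_comm₀ h1q (by positivity)]
    calc (2 * (N:ℝ))⁻¹ = x := by rw [hx]; rw [one_div]
      _ ≤ 1 - q := hxq
  have h5 : 16 * K * (N : ℝ) ^ α * (1 - q)⁻¹ ≤ 16 * K * (N : ℝ) ^ α * (2 * N) := by
    apply mul_le_mul_of_nonneg_left h4
    positivity
  have h6 : 16 * K * (N : ℝ) ^ α * (2 * N) = 32 * K * (N : ℝ) ^ (α + 1) := by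
    rw [Real.rpow_add_one (ne_of_gt hNpos)]
    ring
  linarith

lemma exists_K (δ : ℝ) (hδ0 : 0 < δ) (hδ1 : δ ≤ 1)
    (hS : (fun N : ℕ => goldbachS N - (N : ℝ) ^ 2 / 2) =O[atTop]
      fun N : ℕ => (N : ℝ) ^ (2 - δ)) :
    ∃ K : ℝ, 0 < K ∧ ∀ n : ℕ, |Dfun n| ≤ K * ((n : ℝ) + 1) ^ (2 - δ) := by
  rw [Asymptotics.isBigO_iff] at hS
  obtain ⟨c, hc⟩ := hS
  rw [eventually_atTop] at hc
  obtain ⟨n₀, hn₀⟩ := hc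
  set M : ℝ := 2 * ((n₀ : ℝ) + 1) ^ 4 with hM
  have hM0 : 0 ≤ M := by positivity
  refine ⟨|c| + 2 + M, by positivity, fun n => ?_⟩
  have hone : (1 : ℝ) ≤ ((n : ℝ) + 1) ^ (2 - δ) :=
    Real.one_le_rpow (by linarith [Nat.cast_nonneg (α := ℝ) n]) (by linarith)
  rcases le_or_gt n₀ n with h | h
  · have hb := hn₀ n h
    rw [Real.norm_eq_abs, Real.norm_eq_abs] at hb
    have hb2 : |goldbachS n - (n : ℝ) ^ 2 / 2| ≤ |c| * ((n : ℝ) + 1) ^ (2 - δ) := by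
      refine hb.trans ?_
      rw [abs_of_nonneg (Real.rpow_nonneg (Nat.cast_nonneg n) _)]
      have h1 : (n : ℝ) ^ (2 - δ) ≤ ((n : ℝ) + 1) ^ (2 - δ) :=
        Real.rpow_le_rpow (Nat.cast_nonneg n) (by linarith) (by linarith)
      calc c * (n : ℝ) ^ (2 - δ) ≤ |c| * (n : ℝ) ^ (2 - δ) := by
            apply mul_le_mul_of_nonneg_right (le_abs_self c)
              (Real.rpow_nonneg (Nat.cast_nonneg n) _)
        _ ≤ |c| * ((n : ℝ) + 1) ^ (2 - δ) := by
            apply mul_le_mul_of_nonneg_left h1 (abs_nonneg c)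
    have hlin : ((n : ℝ) + 1) ≤ ((n : ℝ) + 1) ^ (2 - δ) := by
      have := Real.rpow_le_rpow_of_exponent_le
        (by linarith [Nat.cast_nonneg (α := ℝ) n] : (1:ℝ) ≤ (n:ℝ) + 1)
        (by linarith : (1:ℝ) ≤ 2 - δ)
      rwa [Real.rpow_one] at this
    have hD : |Dfun n| ≤ |goldbachS n - (n : ℝ) ^ 2 / 2| + 2 * ((n : ℝ) + 1) := by
      rw [Dfun]
      have : goldbachS n - ((n : ℝ) + 1) * ((n : ℝ) + 2) / 2
          = (goldbachS n - (n : ℝ) ^ 2 / 2) + ((n:ℝ)^2/2 - ((n : ℝ) + 1) * ((n : ℝ) + 2) / 2) := by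
        ring
      rw [this]
      refine (abs_add_le _ _).trans ?_
      have : |(n:ℝ)^2/2 - ((n : ℝ) + 1) * ((n : ℝ) + 2) / 2| = (3*(n:ℝ) + 2)/2 := by
        rw [abs_of_nonpos (by nlinarith [Nat.cast_nonneg (α := ℝ) n])]
        ring
      rw [this]
      have h0 : (0:ℝ) ≤ (n:ℝ) := Nat.cast_nonneg n
      linarith
    calc |Dfun n| ≤ |c| * ((n : ℝ) + 1) ^ (2 - δ) + 2 * ((n : ℝ) + 1) := by linarith
      _ ≤ |c| * ((n : ℝ) + 1) ^ (2 - δ) + 2 * ((n : ℝ) + 1) ^ (2-δ) := by nlinarith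
      _ ≤ (|c| + 2 + M) * ((n : ℝ) + 1) ^ (2 - δ) := by nlinarith
  · have hb : |Dfun n| ≤ M := by
      refine (Dfun_abs_le n).trans ?_
      rw [hM]
      have h1 : ((n:ℝ)+1) ≤ ((n₀:ℝ)+1) := by
        have : (n:ℝ) ≤ (n₀:ℝ) := Nat.cast_le.2 h.le
        linarith
      have h0 : (0:ℝ) ≤ (n:ℝ) + 1 := by positivity
      nlinarith [pow_le_pow_left₀ h0 h1 4]
    calc |Dfun n| ≤ M := hb
      _ ≤ M * ((n : ℝ) + 1) ^ (2 - δ) := le_mul_of_one_le_right hM0 hone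
      _ ≤ (|c| + 2 + M) * ((n : ℝ) + 1) ^ (2 - δ) := by
          apply mul_le_mul_of_nonneg_right _ (by positivity)
          linarith [abs_nonneg c]

lemma vonM_le_log_of_le {k n : ℕ} (h : k ≤ n) (hn : 1 ≤ n) : Λ k ≤ Real.log n := by
  rcases Nat.eq_zero_or_pos k with hk | hk
  · rw [hk]
    simp only [ArithmeticFunction.map_zero]
    exact Real.log_nonneg (by exact_mod_cast hn)
  · refine ArithmeticFunction.vonMangoldt_le_log.trans ?_
    apply Real.log_le_log (by exact_mod_cast hk)
    exact_mod_cast h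

lemma pow2_filter_card (n : ℕ) (hn : 1 ≤ n)
    (f : ℕ × ℕ → ℕ) (hf : ∀ p : ℕ × ℕ, p ∈ Finset.HasAntidiagonal.antidiagonal n → f p ≤ n)
    (hinj : ∀ p ∈ Finset.HasAntidiagonal.antidiagonal n, ∀ q ∈ Finset.HasAntidiagonal.antidiagonal n,
      f p = f q → p = q) : True := trivial

lemma card_pow2_fst (n : ℕ) (hn : 1 ≤ n) :
    ((Finset.HasAntidiagonal.antidiagonal n).filter (fun p => ∃ j, p.1 = 2 ^ j)).card
      ≤ Nat.log 2 n + 1 := by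
  have := Finset.card_le_card_of_injOn (f := fun p : ℕ × ℕ => Nat.log 2 p.1)
    (s := (Finset.HasAntidiagonal.antidiagonal n).filter (fun p => ∃ j, p.1 = 2 ^ j))
    (t := Finset.range (Nat.log 2 n + 1)) ?_ ?_
  · simpa using this
  · intro p hp
    rw [Finset.mem_coe, Finset.mem_filter, Finset.HasAntidiagonal.mem_antidiagonal] at hp
    obtain ⟨hpn, j, hj⟩ := hp
    simp only [Finset.mem_coe, Finset.mem_range, Nat.lt_succ_iff]
    show Nat.log 2 p.1 ≤ Nat.log 2 n
    rw [hj, Nat.log_pow (by norm_num)]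
    rw [Nat.le_log_iff_pow_le (by norm_num) (by omega)]
    omega
  · intro p hp q hq hpq
    simp only [Finset.coe_filter, Set.mem_setOf_eq, Finset.HasAntidiagonal.mem_antidiagonal] at hp hq
    obtain ⟨hpn, j, hj⟩ := hp
    obtain ⟨hqn, i, hi⟩ := hq
    change Nat.log 2 p.1 = Nat.log 2 q.1 at hpq
    rw [hj, hi, Nat.log_pow (by norm_num), Nat.log_pow (by norm_num)] at hpq
    have h1 : p.1 = q.1 := by rw [hj, hi, hpq]
    have h2 : p.2 = q.2 := by omega
    exact Prod.ext h1 h2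

lemma card_pow2_snd (n : ℕ) (hn : 1 ≤ n) :
    ((Finset.HasAntidiagonal.antidiagonal n).filter (fun p => ∃ j, p.2 = 2 ^ j)).card
      ≤ Nat.log 2 n + 1 := by
  have := Finset.card_le_card_of_injOn (f := fun p : ℕ × ℕ => Nat.log 2 p.2)
    (s := (Finset.HasAntidiagonal.antidiagonal n).filter (fun p => ∃ j, p.2 = 2 ^ j))
    (t := Finset.range (Nat.log 2 n + 1)) ?_ ?_
  · simpa using this
  · intro p hp
    rw [Finset.mem_coe, Finset.mem_filter, Finset.HasAntidiagonal.mem_antidiagonal] at hp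
    obtain ⟨hpn, j, hj⟩ := hp
    simp only [Finset.mem_coe, Finset.mem_range, Nat.lt_succ_iff]
    show Nat.log 2 p.2 ≤ Nat.log 2 n
    rw [hj, Nat.log_pow (by norm_num)]
    rw [Nat.le_log_iff_pow_le (by norm_num) (by omega)]
    omega
  · intro p hp q hq hpq
    simp only [Finset.coe_filter, Set.mem_setOf_eq, Finset.HasAntidiagonal.mem_antidiagonal] at hp hq
    obtain ⟨hpn, j, hj⟩ := hp
    obtain ⟨hqn, i, hi⟩ := hq
    change Nat.log 2 p.2 = Nat.log 2 q.2 at hpq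
    rw [hj, hi, Nat.log_pow (by norm_num), Nat.log_pow (by norm_num)] at hpq
    have h2 : p.2 = q.2 := by rw [hj, hi, hpq]
    have h1 : p.1 = q.1 := by omega
    exact Prod.ext h1 h2

lemma isPrimePow_even_pow2 {m : ℕ} (hm : IsPrimePow m) (he : Even m) :
    ∃ j, m = 2 ^ j := by
  obtain ⟨q, k, hq, hk, hqk⟩ := hm
  rw [Nat.prime_iff.symm] at hq
  have h2 : 2 ∣ m := even_iff_two_dvd.mp he
  rw [← hqk] at h2
  have : 2 ∣ q := Nat.Prime.dvd_of_dvd_pow Nat.prime_two h2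
  have hq2 : q = 2 := ((Nat.prime_dvd_prime_iff_eq Nat.prime_two hq).mp this).symm
  exact ⟨k, by rw [← hqk, hq2]⟩

lemma goldbachG_odd_le {n : ℕ} (hn : Odd n) (hn1 : 1 ≤ n) :
    goldbachG n ≤ 2 * (Nat.log 2 n + 1) * Real.log n ^ 2 := by
  classical
  set P : ℕ × ℕ → Prop := fun p => (∃ j, p.1 = 2 ^ j) ∨ (∃ j, p.2 = 2 ^ j) with hP
  have hzero : ∀ p ∈ Finset.HasAntidiagonal.antidiagonal n, ¬ P p → Λ p.1 * Λ p.2 = 0 := by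
    intro p hp hnp
    by_contra h
    have h1 : Λ p.1 ≠ 0 := fun h0 => h (by rw [h0, zero_mul])
    have h2 : Λ p.2 ≠ 0 := fun h0 => h (by rw [h0, mul_zero])
    rw [ArithmeticFunction.vonMangoldt_ne_zero_iff] at h1 h2
    rw [Finset.HasAntidiagonal.mem_antidiagonal] at hp
    have : Even p.1 ∨ Even p.2 := by
      by_contra hee
      push_neg at hee
      obtain ⟨he1, he2⟩ := hee
      rw [Nat.not_even_iff_odd] at he1 he2
      have : Even n := by rw [← hp]; exact Odd.add_odd he1 he2
      exact (Nat.not_even_iff_odd.mpr hn) this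
    apply hnp
    rcases this with he | he
    · exact Or.inl (isPrimePow_even_pow2 h1 he)
    · exact Or.inr (isPrimePow_even_pow2 h2 he)
  have hsplit : goldbachG n = ∑ p ∈ (Finset.HasAntidiagonal.antidiagonal n).filter P, Λ p.1 * Λ p.2 := by
    rw [goldbachG]
    exact (Finset.sum_filter_of_ne (fun p hp h => by
      by_contra hc
      exact h (hzero p hp hc))).symm
  rw [hsplit]
  have hbound : ∀ p ∈ (Finset.HasAntidiagonal.antidiagonal n).filter P,
      Λ p.1 * Λ p.2 ≤ Real.log n ^ 2 := by
    intro p hp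
    rw [Finset.mem_filter, Finset.HasAntidiagonal.mem_antidiagonal] at hp
    have hb1 : Λ p.1 ≤ Real.log n := vonM_le_log_of_le (by omega) hn1
    have hb2 : Λ p.2 ≤ Real.log n := vonM_le_log_of_le (by omega) hn1
    have hn0 : (0:ℝ) ≤ Real.log n := Real.log_nonneg (by exact_mod_cast hn1)
    have := ArithmeticFunction.vonMangoldt_nonneg (n := p.1)
    have := ArithmeticFunction.vonMangoldt_nonneg (n := p.2)
    calc Λ p.1 * Λ p.2 ≤ Real.log n * Real.log n :=
          mul_le_mul hb1 hb2 ‹0 ≤ Λ p.2› hn0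
      _ = Real.log n ^ 2 := by ring
  have hcard : ((Finset.HasAntidiagonal.antidiagonal n).filter P).card ≤ 2 * (Nat.log 2 n + 1) := by
    have hsub : (Finset.HasAntidiagonal.antidiagonal n).filter P ⊆
        ((Finset.HasAntidiagonal.antidiagonal n).filter (fun p => ∃ j, p.1 = 2 ^ j))
          ∪ ((Finset.HasAntidiagonal.antidiagonal n).filter (fun p => ∃ j, p.2 = 2 ^ j)) := by
      rw [← Finset.filter_or]
    calc ((Finset.HasAntidiagonal.antidiagonal n).filter P).card
        ≤ (((Finset.HasAntidiagonal.antidiagonal n).filter (fun p => ∃ j, p.1 = 2 ^ j))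
          ∪ ((Finset.HasAntidiagonal.antidiagonal n).filter (fun p => ∃ j, p.2 = 2 ^ j))).card :=
          Finset.card_le_card hsub
      _ ≤ _ + _ := Finset.card_union_le _ _
      _ ≤ 2 * (Nat.log 2 n + 1) := by
          have := card_pow2_fst n hn1
          have := card_pow2_snd n hn1
          omega
  calc ∑ p ∈ (Finset.HasAntidiagonal.antidiagonal n).filter P, Λ p.1 * Λ p.2
      ≤ ((Finset.HasAntidiagonal.antidiagonal n).filter P).card * Real.log n ^ 2 := by
        simpa using Finset.sum_le_card_nsmul _ _ _ hbound
    _ ≤ (2 * (Nat.log 2 n + 1) : ℕ) * Real.log n ^ 2 := by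
        apply mul_le_mul_of_nonneg_right _ (sq_nonneg _)
        exact_mod_cast hcard
    _ = 2 * (Nat.log 2 n + 1) * Real.log n ^ 2 := by push_cast; ring

lemma natlog_le (n : ℕ) (hn : 2 ≤ n) :
    ((Nat.log 2 n : ℝ) + 1) ≤ 3 * Real.log n := by
  have hn0 : n ≠ 0 := by omega
  have h1 : (2:ℕ) ^ (Nat.log 2 n) ≤ n := Nat.pow_log_le_self 2 hn0
  have h2 : Real.log ((2:ℝ) ^ (Nat.log 2 n)) ≤ Real.log n := by
    apply Real.log_le_log (by positivity)
    exact_mod_cast h1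
  rw [Real.log_pow] at h2
  have hlog2 : (0.6931471803 : ℝ) < Real.log 2 := Real.log_two_gt_d9
  have hlogn : (2:ℝ)/3 ≤ Real.log n := by
    calc (2:ℝ)/3 ≤ 0.6931471803 := by norm_num
      _ ≤ Real.log 2 := hlog2.le
      _ ≤ Real.log n := by
          apply Real.log_le_log (by norm_num)
          exact_mod_cast hn
  have h23 : (2:ℝ)/3 ≤ Real.log 2 := by linarith
  have hLpos : (0:ℝ) ≤ (Nat.log 2 n : ℝ) := Nat.cast_nonneg _
  nlinarith [mul_le_mul_of_nonneg_left h23 hLpos]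

set_option maxHeartbeats 1000000 in
lemma log_cube_le (n : ℕ) (hn : 1 ≤ n) :
    Real.log n ^ 3 ≤ 216 * (n : ℝ) ^ ((1:ℝ)/2) := by
  have hn0 : (0:ℝ) < (n:ℝ) := by exact_mod_cast hn
  have h1 : Real.log ((n:ℝ) ^ ((1:ℝ)/6)) = (1/6) * Real.log n := Real.log_rpow hn0 _
  have h2 : Real.log ((n:ℝ) ^ ((1:ℝ)/6)) ≤ (n:ℝ) ^ ((1:ℝ)/6) := by
    have := Real.log_le_sub_one_of_pos (Real.rpow_pos_of_pos hn0 ((1:ℝ)/6))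
    linarith
  have h3 : Real.log n ≤ 6 * (n:ℝ) ^ ((1:ℝ)/6) := by
    rw [h1] at h2; linarith
  have hlogn0 : 0 ≤ Real.log n := Real.log_natCast_nonneg n
  calc Real.log n ^ 3 ≤ (6 * (n:ℝ) ^ ((1:ℝ)/6)) ^ 3 := by
        apply pow_le_pow_left₀ hlogn0 h3
    _ = 216 * ((n:ℝ) ^ ((1:ℝ)/6)) ^ (3:ℕ) := by ring
    _ = 216 * (n : ℝ) ^ ((1:ℝ)/2) := by
        rw [← Real.rpow_natCast ((n:ℝ) ^ ((1:ℝ)/6)) 3, ← Real.rpow_mul hn0.le]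
        norm_num

set_option maxHeartbeats 2000000 in
lemma hS_false (δ : ℝ) (hδ1 : 1 < δ) (hδ2 : δ < 2)
    (hS : (fun N : ℕ => goldbachS N - (N : ℝ) ^ 2 / 2) =O[atTop]
      fun N : ℕ => (N : ℝ) ^ (2 - δ)) : False := by
  rw [Asymptotics.isBigO_iff] at hS
  obtain ⟨c, hc⟩ := hS
  rw [eventually_atTop] at hc
  obtain ⟨n₀, hn₀⟩ := hc
  set β : ℝ := max (1/2) (2 - δ) with hβ
  have hβ1 : β < 1 := by
    rw [hβ]
    apply max_lt (by norm_num) (by linarith)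
  have hβ0 : 0 < β := lt_of_lt_of_le (by norm_num) (le_max_left _ _)
  set C₂ : ℝ := 1296 + 2 * |c| with hC₂
  have hC₂0 : 0 ≤ C₂ := by positivity
  have htend := tendsto_rpow_atTop (show 0 < 1 - β by linarith)
  have hev := htend.eventually_gt_atTop (C₂ + 1)
  rw [eventually_atTop] at hev
  obtain ⟨M, hM⟩ := hev
  set k : ℕ := n₀ + 2 + Nat.ceil (max M 0) with hk
  set n : ℕ := 2 * k + 1 with hn
  have hodd : Odd n := ⟨k, by omega⟩
  have hn3 : 3 ≤ n := by omega
  have hnn0 : n₀ ≤ 2 * k := by omega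
  have hnn1 : n₀ ≤ n := by omega
  have hnM : M ≤ (n : ℝ) := by
    have h1 : max M 0 ≤ (Nat.ceil (max M 0) : ℝ) := Nat.le_ceil _
    have h2 : (Nat.ceil (max M 0) : ℝ) ≤ (n : ℝ) := by
      have : Nat.ceil (max M 0) ≤ n := by omega
      exact_mod_cast this
    calc M ≤ max M 0 := le_max_left _ _
      _ ≤ _ := h1.trans h2
  have hn1R : (1:ℝ) ≤ (n:ℝ) := by exact_mod_cast (by omega : 1 ≤ n)
  have hn0R : (0:ℝ) < (n:ℝ) := by linarith
  -- error bounds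
  have hE : ∀ m : ℕ, n₀ ≤ m → |goldbachS m - (m:ℝ)^2/2| ≤ |c| * (m:ℝ)^(2-δ) := by
    intro m hm
    have := hn₀ m hm
    rw [Real.norm_eq_abs, Real.norm_eq_abs] at this
    refine this.trans ?_
    rw [abs_of_nonneg (Real.rpow_nonneg (Nat.cast_nonneg m) _)]
    apply mul_le_mul_of_nonneg_right (le_abs_self c)
      (Real.rpow_nonneg (Nat.cast_nonneg m) _)
  have hE1 := hE n hnn1
  have hE2 := hE (2*k) hnn0
  -- G n = S n - S (2k)
  have hGn : goldbachG n = goldbachS n - goldbachS (2*k) := by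
    rw [hn, goldbachS, goldbachS, Finset.sum_range_succ]
    ring_nf
  -- G bound
  have hG1 : goldbachG n ≤ 6 * Real.log n ^ 3 := by
    refine (goldbachG_odd_le hodd (by omega)).trans ?_
    have h1 := natlog_le n (by omega)
    have h2 : (0:ℝ) ≤ Real.log n ^ 2 := sq_nonneg _
    have h3 : (0:ℝ) ≤ Real.log n := Real.log_natCast_nonneg n
    nlinarith
  have hG2 : goldbachG n ≤ 1296 * (n:ℝ) ^ ((1:ℝ)/2) := by
    refine hG1.trans ?_
    have := log_cube_le n (by omega)
    linarith
  -- cast identity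
  have hcast : ((2*k : ℕ) : ℝ) = (n:ℝ) - 1 := by
    push_cast [hn]; ring
  have hmain : (n:ℝ) - 1/2 ≤ goldbachG n + |c| * (n:ℝ)^(2-δ) + |c| * (n:ℝ)^(2-δ) := by
    have hE2' : |goldbachS (2*k) - ((n:ℝ)-1)^2/2| ≤ |c| * (n:ℝ)^(2-δ) := by
      rw [← hcast]
      refine hE2.trans ?_
      apply mul_le_mul_of_nonneg_left _ (abs_nonneg c)
      apply Real.rpow_le_rpow (Nat.cast_nonneg _) _ (by linarith)
      rw [hcast]; linarith
    have ha1 := abs_le.mp hE1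
    have ha2 := abs_le.mp hE2'
    have : goldbachG n = (goldbachS n - (n:ℝ)^2/2) - (goldbachS (2*k) - ((n:ℝ)-1)^2/2)
        + ((n:ℝ) - 1/2) := by
      rw [hGn]; ring
    nlinarith [ha1.1, ha1.2, ha2.1, ha2.2]
  -- exponent comparisons
  have hs1 : (n:ℝ) ^ ((1:ℝ)/2) ≤ (n:ℝ) ^ β :=
    Real.rpow_le_rpow_of_exponent_le hn1R (le_max_left _ _)
  have hs2 : (n:ℝ) ^ (2-δ) ≤ (n:ℝ) ^ β :=
    Real.rpow_le_rpow_of_exponent_le hn1R (le_max_right _ _)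
  have hfinal : (n:ℝ) ≤ C₂ * (n:ℝ) ^ β + 1/2 := by
    have h0 : (0:ℝ) ≤ |c| := abs_nonneg c
    nlinarith [hG2, hmain, hs1, hs2]
  -- lower bound
  have hsplit : (n:ℝ) = (n:ℝ) ^ β * (n:ℝ) ^ (1-β) := by
    rw [← Real.rpow_add hn0R]
    norm_num
  have hβpow : (1:ℝ) ≤ (n:ℝ) ^ β := Real.one_le_rpow hn1R hβ0.le
  have hMn : C₂ + 1 < (n:ℝ) ^ (1-β) := hM (n:ℝ) hnM
  have : (n:ℝ) ^ β * (C₂ + 1) ≤ (n:ℝ) ^ β * (n:ℝ) ^ (1-β) := by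
    apply mul_le_mul_of_nonneg_left hMn.le (by positivity)
  nlinarith

/-- If `S(x) = x²/2 + O(x^{2-δ})` with `0 < δ < 2`, then, with
`F(z) = ∑_{n≥1} Λ(n) zⁿ`, there is `C > 0` such that for every integer `N ≥ 2`
and every `z` with `|z| = 1 - 1/N`, `|F(z)² - 1/(1-z)²| ≤ C |1-z| N^{3-δ}`. -/
theorem goldbach_F_squared_approx (δ : ℝ) (hδ0 : 0 < δ) (hδ2 : δ < 2)
    (hS : (fun N : ℕ => goldbachS N - (N : ℝ) ^ 2 / 2) =O[atTop]
      fun N : ℕ => (N : ℝ) ^ (2 - δ)) :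
    ∃ C : ℝ, 0 < C ∧ ∀ N : ℕ, 2 ≤ N → ∀ z : ℂ, ‖z‖ = 1 - 1 / (N : ℝ) →
      ‖(∑' n : ℕ, (Λ n : ℂ) * z ^ n) ^ 2 - 1 / (1 - z) ^ 2‖ ≤
        C * ‖1 - z‖ * (N : ℝ) ^ (3 - δ) := by
  rcases le_or_gt δ 1 with hδ1 | hδ1
  · obtain ⟨K, hK0, hK⟩ := exists_K δ hδ0 hδ1 hS
    refine ⟨32 * K, by positivity, fun N hN z hz => ?_⟩
    have hN1R : (1:ℝ) ≤ (N:ℝ) := by exact_mod_cast Nat.one_le_of_lt hN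
    have hz1 : ‖z‖ < 1 := by
      rw [hz]
      have : (0:ℝ) < 1 / (N:ℝ) := by positivity
      linarith
    rw [key_identity hz1, norm_mul]
    have hb := tsum_D_bound (2 - δ) K (by linarith) (by linarith) hK0.le hK N hN z hz
    have h3 : (2 - δ) + 1 = 3 - δ := by ring
    rw [h3] at hb
    calc ‖1 - z‖ * ‖∑' n, ((Dfun n : ℝ) : ℂ) * z ^ n‖
        ≤ ‖1 - z‖ * (32 * K * (N:ℝ) ^ (3 - δ)) :=
          mul_le_mul_of_nonneg_left hb (norm_nonneg _)
      _ = 32 * K * ‖1 - z‖ * (N:ℝ) ^ (3 - δ) := by ring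
  · exact (hS_false δ hδ1 hδ2 hS).elim
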